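/- Let A ∈ ℝ^{n×n}, B^m ∈ ℝ^{n×m}, B^p ∈ ℝ^{n×r} with rank(B^p) = r, C ∈ ℝ^{p×n}, and let U ∈ ℝ^{m×N}, W ∈ ℝ^{r×N}, X ∈ ℝ^{n×N} be data matrices such that [U; W; X] has full row rank m + r + n. Define Ẋ := A X + B^m U + B^p W and Y := C X. Let H ∈ ℝ^{n×p} satisfy H C B^p = B^p and rank(H) = r. Then the following are equivalent: (a) for every s ∈ ℂ with Re(s) ≥ 0, the rank over ℂ of [s X − Ẋ; U; Y] equals n + m + r; (b) the pair ((I − H C) A, C) is detectable. -/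

import Mathlib

open Matrix

private lemma rank_eq_card_iff_inj' {K : Type*} [Field K] {α β : Type*} [Fintype α] [Fintype β]
    (M : Matrix α β K) :
    M.rank = Fintype.card β ↔ Function.Injective M.mulVecLin := by
  classical
  rw [← LinearMap.ker_eq_bot]
  have hrn := LinearMap.finrank_range_add_finrank_ker M.mulVecLin
  rw [Module.finrank_pi] at hrn
  unfold Matrix.rank
  constructor
  · intro h
    have h0 : Module.finrank K (LinearMap.ker M.mulVecLin) = 0 := by omega
    exact Submodule.finrank_eq_zero.mp h0
  · intro h
    rw [h, finrank_bot] at hrn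
    omega

private lemma rank_mul_of_surj' {K : Type*} [Field K] {α β γ : Type*} [Fintype β] [Fintype γ]
    (T : Matrix α β K) (D : Matrix β γ K) (hD : Function.Surjective D.mulVecLin) :
    (T * D).rank = T.rank := by
  unfold Matrix.rank
  rw [Matrix.mulVecLin_mul, LinearMap.range_comp, LinearMap.range_eq_top.mpr hD,
    Submodule.map_top]

private lemma det_ne_zero_of_rank' {K : Type*} [Field K] {α : Type*} [Fintype α] [DecidableEq α]
    (A : Matrix α α K) (h : A.rank = Fintype.card α) : A.det ≠ 0 := by
  rw [rank_eq_card_iff_inj'] at h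
  rw [Ne, ← Matrix.exists_mulVec_eq_zero_iff]
  rintro ⟨v, hv, hv0⟩
  exact hv (h (show A.mulVecLin v = A.mulVecLin 0 by
    simpa [Matrix.mulVecLin_apply] using hv0))

private lemma map_mul_ofReal {α β γ : Type*} [Fintype β] (M : Matrix α β ℝ) (N : Matrix β γ ℝ) :
    (M * N).map Complex.ofReal = M.map Complex.ofReal * N.map Complex.ofReal :=
  Matrix.map_mul (f := Complex.ofRealHom)

private lemma det_map_ne_zero {α : Type*} [Fintype α] [DecidableEq α] (A : Matrix α α ℝ)
    (h : A.rank = Fintype.card α) : (A.map Complex.ofReal).det ≠ 0 := by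
  have h1 := det_ne_zero_of_rank' A h
  have : (A.map Complex.ofReal).det = Complex.ofReal A.det :=
    (RingHom.map_det Complex.ofRealHom A).symm
  rw [this]
  exact_mod_cast h1

private lemma surj_ofReal_of_rank {α : Type*} [Fintype α] [DecidableEq α] {N : ℕ}
    (D : Matrix α (Fin N) ℝ) (h : D.rank = Fintype.card α) :
    Function.Surjective (D.map Complex.ofReal).mulVecLin := by
  have hG : (D * Dᵀ).rank = Fintype.card α := by rw [Matrix.rank_self_mul_transpose, h]
  have hdet := det_map_ne_zero _ hG
  set G : Matrix α α ℂ := (D * Dᵀ).map Complex.ofReal with hGdef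
  intro y
  refine ⟨(Dᵀ.map Complex.ofReal).mulVec (G⁻¹.mulVec y), ?_⟩
  have h1 : D.map Complex.ofReal * Dᵀ.map Complex.ofReal = G := (map_mul_ofReal _ _).symm
  calc (D.map Complex.ofReal).mulVecLin ((Dᵀ.map Complex.ofReal).mulVec (G⁻¹.mulVec y))
      = ((G * G⁻¹)).mulVec y := by
        rw [Matrix.mulVecLin_apply, Matrix.mulVec_mulVec, Matrix.mulVec_mulVec, h1]
    _ = y := by
        rw [Matrix.mul_nonsing_inv _ (isUnit_iff_ne_zero.mpr hdet), Matrix.one_mulVec]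

private lemma inj_ofReal_of_rank {n r : ℕ} (Bp : Matrix (Fin n) (Fin r) ℝ) (h : Bp.rank = r)
    {w : Fin r → ℂ} (hw : (Bp.map Complex.ofReal).mulVec w = 0) : w = 0 := by
  have hG : (Bpᵀ * Bp).rank = Fintype.card (Fin r) := by
    rw [Matrix.rank_transpose_mul_self, h, Fintype.card_fin]
  have hdet := det_map_ne_zero _ hG
  set G : Matrix (Fin r) (Fin r) ℂ := (Bpᵀ * Bp).map Complex.ofReal with hGdef
  have h2 : G.mulVec w = 0 := by
    rw [hGdef, map_mul_ofReal, ← Matrix.mulVec_mulVec, hw, Matrix.mulVec_zero]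
  calc w = (G⁻¹ * G).mulVec w := by
        rw [Matrix.nonsing_inv_mul _ (isUnit_iff_ne_zero.mpr hdet), Matrix.one_mulVec]
    _ = G⁻¹.mulVec (G.mulVec w) := by rw [Matrix.mulVec_mulVec]
    _ = 0 := by rw [h2, Matrix.mulVec_zero]

private lemma exists_factor {n r pdim : ℕ} (Bp : Matrix (Fin n) (Fin r) ℝ) (hBp : Bp.rank = r)
    (C : Matrix (Fin pdim) (Fin n) ℝ) (H : Matrix (Fin n) (Fin pdim) ℝ)
    (hH : H * C * Bp = Bp) (hHrank : H.rank = r) :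
    ∃ G : Matrix (Fin r) (Fin pdim) ℝ, H = Bp * G := by
  have hle : LinearMap.range Bp.mulVecLin ≤ LinearMap.range H.mulVecLin := by
    rintro _ ⟨v, rfl⟩
    refine ⟨(C * Bp).mulVec v, ?_⟩
    rw [Matrix.mulVecLin_apply, Matrix.mulVecLin_apply, Matrix.mulVec_mulVec,
      ← Matrix.mul_assoc, hH]
  have heq : LinearMap.range Bp.mulVecLin = LinearMap.range H.mulVecLin := by
    apply Submodule.eq_of_le_of_finrank_le hle
    show Module.finrank ℝ (LinearMap.range H.mulVecLin) ≤ _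
    rw [show Module.finrank ℝ (LinearMap.range H.mulVecLin) = H.rank from rfl,
      show Module.finrank ℝ (LinearMap.range Bp.mulVecLin) = Bp.rank from rfl, hBp, hHrank]
  have hcol : ∀ j, ∃ g : Fin r → ℝ, Bp.mulVec g = fun i => H i j := by
    intro j
    have hmem : H.mulVec (Pi.single j 1) ∈ LinearMap.range Bp.mulVecLin := by
      rw [heq]; exact ⟨Pi.single j 1, rfl⟩
    obtain ⟨g, hg⟩ := hmem
    exact ⟨g, by rw [Matrix.mulVecLin_apply] at hg; rw [hg, Matrix.mulVec_single_one]; rfl⟩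
  choose g hg using hcol
  refine ⟨Matrix.of fun i j => g j i, ?_⟩
  ext i j
  have h3 := congrFun (hg j) i
  simpa [Matrix.mulVec, Matrix.mul_apply, dotProduct] using h3.symm

private lemma sum_elim_eq_zero_iff {α β γ : Type*} [Zero γ] {f : α → γ} {g : β → γ} :
    Sum.elim f g = 0 ↔ f = 0 ∧ g = 0 := by
  constructor
  · intro h
    exact ⟨funext fun i => congrFun h (Sum.inl i), funext fun i => congrFun h (Sum.inr i)⟩
  · rintro ⟨rfl, rfl⟩
    ext (i | i) <;> rfl

/-- PBH detectability of a pair `(M, C)` of real matrices. -/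
def Detectable {n p : ℕ} (M : Matrix (Fin n) (Fin n) ℝ)
    (C : Matrix (Fin p) (Fin n) ℝ) : Prop :=
  ∀ s : ℂ, 0 ≤ s.re →
    (Matrix.fromRows (s • (1 : Matrix (Fin n) (Fin n) ℂ) - M.map Complex.ofReal)
      (C.map Complex.ofReal)).rank = n

/-- Data-driven detectability check: the rank condition on the stacked data matrix
`[sX − Ẋ; U; Y]` over the closed right half-plane is equivalent to detectability of
`((I − HC)A, C)`. -/
theorem stmt13 {n m r pdim N : ℕ}
    (A : Matrix (Fin n) (Fin n) ℝ)
    (Bm : Matrix (Fin n) (Fin m) ℝ) (Bp : Matrix (Fin n) (Fin r) ℝ)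
    (hBp : Bp.rank = r)
    (C : Matrix (Fin pdim) (Fin n) ℝ)
    (U : Matrix (Fin m) (Fin N) ℝ) (W : Matrix (Fin r) (Fin N) ℝ)
    (X : Matrix (Fin n) (Fin N) ℝ)
    (hrank : (Matrix.fromRows U (Matrix.fromRows W X)).rank = m + r + n)
    (Xdot : Matrix (Fin n) (Fin N) ℝ) (hXdot : Xdot = A * X + Bm * U + Bp * W)
    (Y : Matrix (Fin pdim) (Fin N) ℝ) (hY : Y = C * X)
    (H : Matrix (Fin n) (Fin pdim) ℝ)
    (hH : H * C * Bp = Bp) (hHrank : H.rank = r) :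
    (∀ s : ℂ, 0 ≤ s.re →
        (Matrix.fromRows (s • X.map Complex.ofReal - Xdot.map Complex.ofReal)
          (Matrix.fromRows (U.map Complex.ofReal) (Y.map Complex.ofReal))).rank =
          n + m + r) ↔
      Detectable ((1 - H * C) * A) C := by
  classical
  obtain ⟨G, hGfac⟩ := exists_factor Bp hBp C H hH hHrank
  have key : ∀ s : ℂ,
      ((Matrix.fromRows (s • X.map Complex.ofReal - Xdot.map Complex.ofReal)
        (Matrix.fromRows (U.map Complex.ofReal) (Y.map Complex.ofReal))).rank = n + m + r) ↔
      ((Matrix.fromRows (s • (1 : Matrix (Fin n) (Fin n) ℂ) -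
        ((1 - H * C) * A).map Complex.ofReal) (C.map Complex.ofReal)).rank = n) := by
    intro s
    set Ac := A.map Complex.ofReal with hAcdef
    set Bmc := Bm.map Complex.ofReal with hBmcdef
    set Bpc := Bp.map Complex.ofReal with hBpcdef
    set Cc := C.map Complex.ofReal with hCcdef
    set Uc := U.map Complex.ofReal with hUcdef
    set Wc := W.map Complex.ofReal with hWcdef
    set Xc := X.map Complex.ofReal with hXcdef
    set Hc := H.map Complex.ofReal with hHcdef
    set Gc := G.map Complex.ofReal with hGcdef
    -- complexified hypotheses
    have hHc : Hc * Cc * Bpc = Bpc := by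
      rw [hHcdef, hCcdef, hBpcdef, ← map_mul_ofReal, ← map_mul_ofReal, hH]
    have hHcfac : Hc = Bpc * Gc := by
      rw [hHcdef, hBpcdef, hGcdef, ← map_mul_ofReal, ← hGfac]
    have hMc : ((1 - H * C) * A).map Complex.ofReal = (1 - Hc * Cc) * Ac := by
      rw [map_mul_ofReal, hAcdef]
      congr 1
      rw [Matrix.map_sub _ (fun a b => Complex.ofReal_sub a b),
        Matrix.map_one _ Complex.ofReal_zero Complex.ofReal_one, map_mul_ofReal, hHcdef, hCcdef]
    have hXdotc : Xdot.map Complex.ofReal = Ac * Xc + Bmc * Uc + Bpc * Wc := by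
      rw [hXdot, Matrix.map_add _ (fun a b => Complex.ofReal_add a b),
        Matrix.map_add _ (fun a b => Complex.ofReal_add a b),
        map_mul_ofReal, map_mul_ofReal, map_mul_ofReal]
    have hYc : Y.map Complex.ofReal = Cc * Xc := by rw [hY, map_mul_ofReal]
    -- the block matrices
    set D : Matrix (Fin m ⊕ (Fin r ⊕ Fin n)) (Fin N) ℂ :=
      Matrix.fromRows Uc (Matrix.fromRows Wc Xc) with hDdef
    set T : Matrix (Fin n ⊕ (Fin m ⊕ Fin pdim)) (Fin m ⊕ (Fin r ⊕ Fin n)) ℂ :=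
      Matrix.fromRows
        (Matrix.fromCols (-Bmc) (Matrix.fromCols (-Bpc) (s • 1 - Ac)))
        (Matrix.fromRows (Matrix.fromCols 1 (Matrix.fromCols 0 0))
          (Matrix.fromCols 0 (Matrix.fromCols 0 Cc))) with hTdef
    have hDsurj : Function.Surjective D.mulVecLin := by
      have hDeq : D = (Matrix.fromRows U (Matrix.fromRows W X)).map Complex.ofReal := by
        ext (i | i | i) j <;>
          simp [hDdef, hUcdef, hWcdef, hXcdef, Matrix.map_apply]
      rw [hDeq]
      apply surj_ofReal_of_rank
      simp only [Fintype.card_sum, Fintype.card_fin, hrank]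
      omega
    have hfac : Matrix.fromRows (s • Xc - Xdot.map Complex.ofReal)
        (Matrix.fromRows Uc (Y.map Complex.ofReal)) = T * D := by
      rw [hTdef, hDdef]
      simp only [Matrix.fromRows_mul, Matrix.fromCols_mul_fromRows,
        Matrix.fromRows_ext_iff]
      refine ⟨?_, ?_, ?_⟩
      · rw [hXdotc, Matrix.sub_mul, Matrix.smul_mul, Matrix.one_mul,
          Matrix.neg_mul, Matrix.neg_mul]
        abel
      · simp
      · simp [hYc]
    rw [hfac, rank_mul_of_surj' T D hDsurj, hMc]
    -- translate both ranks into injectivity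
    have e1 : Fintype.card (Fin m ⊕ (Fin r ⊕ Fin n)) = n + m + r := by
      simp only [Fintype.card_sum, Fintype.card_fin]; omega
    have hL := rank_eq_card_iff_inj' T
    rw [e1] at hL
    set Td : Matrix (Fin n ⊕ Fin pdim) (Fin n) ℂ :=
      Matrix.fromRows (s • (1 : Matrix (Fin n) (Fin n) ℂ) - (1 - Hc * Cc) * Ac) Cc with hTddef
    have hR := rank_eq_card_iff_inj' Td
    rw [Fintype.card_fin] at hR
    rw [hL, hR]
    rw [injective_iff_map_eq_zero, injective_iff_map_eq_zero]
    -- mulVec computations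
    have hTmul : ∀ (u : Fin m → ℂ) (w : Fin r → ℂ) (x : Fin n → ℂ),
        T.mulVec (Sum.elim u (Sum.elim w x)) =
          Sum.elim (-(Bmc.mulVec u) + (-(Bpc.mulVec w) +
            (s • (1 : Matrix (Fin n) (Fin n) ℂ) - Ac).mulVec x))
          (Sum.elim u (Cc.mulVec x)) := by
      intro u w x
      rw [hTdef]
      simp [Matrix.fromRows_mulVec, Matrix.fromCols_mulVec_sumElim, Matrix.neg_mulVec,
        Matrix.one_mulVec, Matrix.zero_mulVec, Matrix.fromBlocks_mulVec, Matrix.mulVec_zero]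
    have hsub : ∀ x : Fin n → ℂ,
        (s • (1 : Matrix (Fin n) (Fin n) ℂ) - Ac).mulVec x = s • x - Ac.mulVec x := by
      intro x
      rw [Matrix.sub_mulVec, Matrix.smul_mulVec, Matrix.one_mulVec]
    have hexp : ∀ x : Fin n → ℂ,
        (s • (1 : Matrix (Fin n) (Fin n) ℂ) - (1 - Hc * Cc) * Ac).mulVec x =
          (s • x - Ac.mulVec x) + Hc.mulVec (Cc.mulVec (Ac.mulVec x)) := by
      intro x
      rw [Matrix.sub_mulVec, Matrix.smul_mulVec, Matrix.one_mulVec,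
        ← Matrix.mulVec_mulVec (v := x) (M := (1 - Hc * Cc)) (N := Ac),
        Matrix.sub_mulVec, Matrix.one_mulVec,
        ← Matrix.mulVec_mulVec (v := Ac.mulVec x) (M := Hc) (N := Cc)]
      abel
    constructor
    · -- data rank condition implies detectability
      intro hI x hx
      rw [Matrix.mulVecLin_apply, hTddef, Matrix.fromRows_mulVec, sum_elim_eq_zero_iff] at hx
      obtain ⟨h1, h2⟩ := hx
      rw [hexp] at h1
      set w : Fin r → ℂ := -(Gc.mulVec (Cc.mulVec (Ac.mulVec x))) with hwdef
      have hBw : Bpc.mulVec w = -(Hc.mulVec (Cc.mulVec (Ac.mulVec x))) := by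
        rw [hwdef, Matrix.mulVec_neg, Matrix.mulVec_mulVec, ← hHcfac]
      have hsx : s • x - Ac.mulVec x = Bpc.mulVec w := by
        rw [hBw]
        exact eq_neg_of_add_eq_zero_left h1
      have hall := hI (Sum.elim 0 (Sum.elim w x)) ?_
      · funext i
        exact congrFun hall (Sum.inr (Sum.inr i))
      · rw [Matrix.mulVecLin_apply, hTmul]
        rw [sum_elim_eq_zero_iff]
        constructor
        · rw [hsub, hsx]
          simp
        · rw [sum_elim_eq_zero_iff]
          exact ⟨rfl, h2⟩
    · -- detectability implies data rank condition
      intro hI v hv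
      have hvdec : v = Sum.elim (v ∘ Sum.inl)
          (Sum.elim (v ∘ Sum.inr ∘ Sum.inl) (v ∘ Sum.inr ∘ Sum.inr)) := by
        ext (i | i | i) <;> rfl
      set u := v ∘ Sum.inl with hu
      set w := v ∘ Sum.inr ∘ Sum.inl with hw
      set x := v ∘ Sum.inr ∘ Sum.inr with hx
      rw [Matrix.mulVecLin_apply, hvdec, hTmul, sum_elim_eq_zero_iff, sum_elim_eq_zero_iff] at hv
      obtain ⟨he1, he2, he3⟩ := hv
      rw [he2, Matrix.mulVec_zero, neg_zero, zero_add] at he1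
      have hsx : s • x - Ac.mulVec x = Bpc.mulVec w := by
        rw [hsub] at he1
        exact (neg_add_eq_zero.mp he1).symm
      have hAx : Ac.mulVec x = s • x - Bpc.mulVec w := by
        rw [← hsx]; abel
      have hCAx : Cc.mulVec (Ac.mulVec x) = -((Cc * Bpc).mulVec w) := by
        rw [hAx, Matrix.mulVec_sub, Matrix.mulVec_smul, he3, smul_zero, zero_sub,
          Matrix.mulVec_mulVec]
      have hx0 : x = 0 := by
        apply hI x
        rw [Matrix.mulVecLin_apply, hTddef, Matrix.fromRows_mulVec, sum_elim_eq_zero_iff]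
        refine ⟨?_, he3⟩
        rw [hexp, hsx, hCAx, Matrix.mulVec_neg, Matrix.mulVec_mulVec, ← Matrix.mul_assoc, hHc]
        abel
      have hw0 : w = 0 := by
        apply inj_ofReal_of_rank Bp hBp
        rw [← hBpcdef, ← hsx, hx0]
        simp
      rw [hvdec, he2, hw0, hx0]
      ext (i | i | i) <;> rfl
  unfold Detectable
  exact forall_congr' fun s => imp_congr_right fun _ => key s
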